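/- Let ops : ℤ → Bool and let a ≤ b be integers such that ops_i = ops_a for all i ≤ a and ops_i = ops_b for all i ≥ b (i.e., ops is constant on each of the two infinite tails). Then the set of fixed points of the infinite-chain AND-OR network determined by ops is finite, and its cardinality equals F([ops_a, ops_{a+1}, …, ops_b]), the number of fixed points of the open-chain AND-OR network on b − a + 3 nodes whose operator list is the restriction of ops to [a, b]. -/

import Mathlib

/-- The open-chain AND-OR network map determined by an operator list `ops`
(`true` = AND, `false` = OR), on `ops.length + 2` nodes. -/
def chainMap (ops : List Bool) (x : Fin (ops.length + 2) → Bool) :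
    Fin (ops.length + 2) → Bool := fun i =>
  if h0 : (i : ℕ) = 0 then x ⟨1, by omega⟩
  else if hn : (i : ℕ) = ops.length + 1 then x ⟨ops.length, by omega⟩
  else
    have hi : 1 ≤ (i : ℕ) ∧ (i : ℕ) ≤ ops.length := by
      have := i.isLt; omega
    if ops.get ⟨(i : ℕ) - 1, by omega⟩
    then x ⟨(i : ℕ) - 1, by omega⟩ && x ⟨(i : ℕ) + 1, by omega⟩
    else x ⟨(i : ℕ) - 1, by omega⟩ || x ⟨(i : ℕ) + 1, by omega⟩

/-- `F ops` is the number of fixed points of the open-chain AND-OR network. -/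
noncomputable def F (ops : List Bool) : ℕ :=
  Nat.card {x : Fin (ops.length + 2) → Bool // chainMap ops x = x}

/-- Run-length encoding: block `j` (1-based) consists of `k_j` copies of
`true` if `j` is odd and `false` if `j` is even. -/
def runOps : List ℕ → List Bool
  | [] => []
  | k :: t => List.replicate k true ++ (runOps t).map (fun b => !b)

/-- `Fr L` = 𝔉(L), the number of fixed points of the open-chain AND-OR
network with run-length list `L`. -/
noncomputable def Fr (L : List ℕ) : ℕ := F (runOps L)

/-- The infinite-chain AND-OR network map determined by `ops : ℤ → Bool`
(`true` = AND, `false` = OR). -/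
def infMap (ops : ℤ → Bool) (x : ℤ → Bool) : ℤ → Bool := fun i =>
  if ops i then x (i - 1) && x (i + 1) else x (i - 1) || x (i + 1)

set_option maxHeartbeats 1000000 in
private lemma castList (l : List ℕ) :
    (List.flatMap (fun a : ℕ => [(a:ℤ)]) l) = l.map (fun a : ℕ => (a:ℤ)) := by
  induction l with
  | nil => rfl
  | cons h t ih => simp [List.flatMap_cons, ih]

private lemma infMap_eq (ops x : ℤ → Bool) (hx : infMap ops x = x) (i : ℤ) :
    x i = if ops i then x (i-1) && x (i+1) else x (i-1) || x (i+1) := by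
  conv_lhs => rw [← hx]
  rfl

private lemma step (ops x : ℤ → Bool) (hx : infMap ops x = x) (i : ℤ)
    (h : ops i = ops (i+1)) : x i = x (i+1) := by
  have e1 := infMap_eq ops x hx i
  have e2 := infMap_eq ops x hx (i+1)
  rw [show i+1-1 = i by ring] at e2
  rw [← h] at e2
  cases hop : ops i <;> rw [hop] at e1 e2 <;>
    cases h1 : x i <;> cases h2 : x (i+1) <;> simp_all

private lemma tail_left (ops x : ℤ → Bool) (hx : infMap ops x = x) (a : ℤ)
    (ha : ∀ i ≤ a, ops i = ops a) : ∀ i ≤ a, x i = x a := by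
  have key : ∀ n : ℕ, x (a - n) = x a := by
    intro n
    induction n with
    | zero => simp
    | succ k ih =>
      have hstep : x (a - (k+1:ℕ)) = x (a - (k+1:ℕ) + 1) := by
        apply step ops x hx
        rw [ha _ (by push_cast; omega)]
        exact (ha _ (by push_cast; omega)).symm
      rw [hstep, show a - ((k+1:ℕ):ℤ) + 1 = a - k by push_cast; ring, ih]
  intro i hi
  have h2 : i = a - ((a - i).toNat : ℤ) := by omega
  rw [h2, key]

private lemma tail_right (ops x : ℤ → Bool) (hx : infMap ops x = x) (b : ℤ)
    (hb : ∀ i, b ≤ i → ops i = ops b) : ∀ i, b ≤ i → x i = x b := by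
  have key : ∀ n : ℕ, x (b + n) = x b := by
    intro n
    induction n with
    | zero => simp
    | succ k ih =>
      have hstep : x (b + k) = x (b + k + 1) := by
        apply step ops x hx
        rw [hb _ (by omega)]
        exact (hb _ (by omega)).symm
      rw [show b + ((k+1:ℕ):ℤ) = b + k + 1 by push_cast; ring, ← hstep, ih]
  intro i hi
  have h2 : i = b + ((i - b).toNat : ℤ) := by omega
  rw [h2, key]


/-- if the operator function of an infinite chain is constant
on both infinite tails `(-∞, a]` and `[b, ∞)`, then the fixed-point set is
finite, of cardinality `F([ops a, …, ops b])`. -/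
theorem andor_infinite_chain_eventually_constant (ops : ℤ → Bool) (a b : ℤ)
    (hab : a ≤ b)
    (ha : ∀ i : ℤ, i ≤ a → ops i = ops a)
    (hb : ∀ i : ℤ, b ≤ i → ops i = ops b) :
    {x : ℤ → Bool | infMap ops x = x}.Finite ∧
    Set.ncard {x : ℤ → Bool | infMap ops x = x} =
      F ((List.range (b - a + 1).toNat).map (fun j => ops (a + j))) := by
  set opsL := (List.range (b - a + 1).toNat).map (fun j => ops (a + j)) with hopsL
  have hm : (opsL.length : ℤ) = b - a + 1 := by
    simp [hopsL, castList]
    omega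
  have hget : ∀ (j : ℕ) (hj : j < opsL.length), opsL.get ⟨j, hj⟩ = ops (a + j) := by
    intro j hj
    simp [hopsL, castList]
  -- restriction of an infinite fixed point is a fixed point of the open chain
  have hfix : ∀ x : ℤ → Bool, infMap ops x = x →
      chainMap opsL (fun i : Fin (opsL.length+2) => x (a - 1 + (i:ℤ))) = fun i : Fin (opsL.length+2) => x (a - 1 + (i:ℤ)) := by
    intro x hx
    funext i
    have hlt := i.isLt
    unfold chainMap
    by_cases h0 : (i:ℕ) = 0
    · rw [dif_pos h0]
      show x (a - 1 + ((1:ℕ):ℤ)) = x (a - 1 + ((i:ℕ):ℤ))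
      rw [h0]
      rw [show a - 1 + ((1:ℕ):ℤ) = a - 1 + 1 by norm_num,
          show a - 1 + ((0:ℕ):ℤ) = a - 1 by norm_num]
      exact (step ops x hx (a-1) (by rw [ha _ (by omega)]; exact (ha _ (by omega)).symm)).symm
    · by_cases hn : (i:ℕ) = opsL.length + 1
      · rw [dif_neg h0, dif_pos hn]
        show x (a - 1 + ((opsL.length:ℕ):ℤ)) = x (a - 1 + ((i:ℕ):ℤ))
        rw [hn]
        rw [show a - 1 + ((opsL.length:ℕ):ℤ) = b by omega,
            show a - 1 + (((opsL.length+1:ℕ)):ℤ) = b + 1 by push_cast; omega]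
        exact step ops x hx b (by rw [hb _ le_rfl]; exact (hb _ (by omega)).symm)
      · rw [dif_neg h0, dif_neg hn]
        have hi1 : 1 ≤ (i:ℕ) ∧ (i:ℕ) ≤ opsL.length := by omega
        have hop : opsL.get ⟨(i:ℕ)-1, by omega⟩ = ops (a - 1 + (i:ℕ)) := by
          rw [hget]
          congr 1
          omega
        have heq := infMap_eq ops x hx (a - 1 + (i:ℕ))
        rw [show a - 1 + ((i:ℕ):ℤ) - 1 = a - 1 + (((i:ℕ)-1:ℕ):ℤ) by omega,
            show a - 1 + ((i:ℕ):ℤ) + 1 = a - 1 + (((i:ℕ)+1:ℕ):ℤ) by omega] at heq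
        show (if opsL.get ⟨(i:ℕ)-1, by omega⟩
              then x (a-1+(((i:ℕ)-1:ℕ):ℤ)) && x (a-1+(((i:ℕ)+1:ℕ):ℤ))
              else x (a-1+(((i:ℕ)-1:ℕ):ℤ)) || x (a-1+(((i:ℕ)+1:ℕ):ℤ)))
            = x (a-1+((i:ℕ):ℤ))
        rw [hop]
        exact heq.symm
  -- injectivity of restriction
  have hinj : ∀ x x' : ℤ → Bool, infMap ops x = x → infMap ops x' = x' →
      (fun i : Fin (opsL.length+2) => x (a-1+(i:ℤ))) = (fun i : Fin (opsL.length+2) => x' (a-1+(i:ℤ))) →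
      x = x' := by
    intro x x' hx hx' hr
    have hr' : ∀ k : ℕ, k < opsL.length + 2 → x (a-1+(k:ℤ)) = x' (a-1+(k:ℤ)) := by
      intro k hk; exact congrFun hr ⟨k, hk⟩
    funext i
    rcases le_or_gt i a with h | h
    · rw [tail_left ops x hx a ha i h, tail_left ops x' hx' a ha i h]
      have := hr' 1 (by omega)
      rw [show a - 1 + ((1:ℕ):ℤ) = a by norm_num] at this
      exact this
    rcases le_or_gt b i with h2 | h2
    · rw [tail_right ops x hx b hb i h2, tail_right ops x' hx' b hb i h2]
      have := hr' ((b-a+1).toNat) (by omega)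
      rw [show a - 1 + (((b-a+1).toNat:ℕ):ℤ) = b by omega] at this
      exact this
    · have := hr' ((i-a+1).toNat) (by omega)
      rw [show a - 1 + (((i-a+1).toNat:ℕ):ℤ) = i by omega] at this
      exact this
  -- extension map
  have hbound : ∀ i : ℤ, ((min (max i (a-1)) (b+1)) - (a-1)).toNat < opsL.length + 2 := by
    intro i; omega
  set ext : (Fin (opsL.length+2) → Bool) → ℤ → Bool := fun y i =>
    y ⟨((min (max i (a-1)) (b+1)) - (a-1)).toNat, hbound i⟩ with hext
  have hval : ∀ (y : Fin (opsL.length+2) → Bool) (i : ℤ) (k : ℕ) (hk : k < opsL.length + 2),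
      ((min (max i (a-1)) (b+1)) - (a-1)).toNat = k → ext y i = y ⟨k, hk⟩ := by
    intro y i k hk h
    rw [hext]
    exact congrArg y (Fin.ext h)
  -- extension of an open-chain fixed point is an infinite fixed point, restricting back
  have hEXT : ∀ y : Fin (opsL.length+2) → Bool, chainMap opsL y = y →
      infMap ops (ext y) = ext y ∧
      (fun i : Fin (opsL.length+2) => ext y (a-1+(i:ℤ))) = y := by
    intro y hy
    have hy0 : y ⟨1, by omega⟩ = y ⟨0, by omega⟩ := by
      have h := congrFun hy ⟨0, by omega⟩
      simpa [chainMap] using h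
    have hlen : 1 ≤ opsL.length := by omega
    have hyN : y ⟨opsL.length, by omega⟩ = y ⟨opsL.length+1, by omega⟩ := by
      have h := congrFun hy ⟨opsL.length+1, by omega⟩
      simpa [chainMap] using h
    have hyI : ∀ (j : ℕ) (h1 : 1 ≤ j) (h2 : j ≤ opsL.length),
        y ⟨j, by omega⟩ = if opsL.get ⟨j-1, by omega⟩
          then y ⟨j-1, by omega⟩ && y ⟨j+1, by omega⟩
          else y ⟨j-1, by omega⟩ || y ⟨j+1, by omega⟩ := by
      intro j h1 h2
      have h := congrFun hy ⟨j, by omega⟩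
      unfold chainMap at h
      rw [dif_neg (by simp; omega), dif_neg (by simp; omega)] at h
      exact h.symm
    constructor
    · funext i
      show (if ops i then ext y (i-1) && ext y (i+1) else ext y (i-1) || ext y (i+1))
            = ext y i
      by_cases hia : i ≤ a - 1
      · have e1 : ext y (i-1) = y ⟨0, by omega⟩ := hval y _ 0 (by omega) (by omega)
        have e2 : ext y i = y ⟨0, by omega⟩ := hval y _ 0 (by omega) (by omega)
        have e3 : ext y (i+1) = y ⟨0, by omega⟩ := by
          by_cases h : i + 1 ≤ a - 1
          · exact hval y _ 0 (by omega) (by omega)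
          · rw [hval y _ 1 (by omega) (by omega)]
            exact hy0
        rw [e1, e2, e3]
        cases hop : ops i <;> simp
      · by_cases hib : b + 1 ≤ i
        · have e1 : ext y (i-1) = y ⟨opsL.length+1, by omega⟩ := by
            by_cases h : b + 1 ≤ i - 1
            · exact hval y _ _ (by omega) (by omega)
            · rw [hval y _ opsL.length (by omega) (by omega)]
              exact hyN
          have e2 : ext y i = y ⟨opsL.length+1, by omega⟩ :=
            hval y _ _ (by omega) (by omega)
          have e3 : ext y (i+1) = y ⟨opsL.length+1, by omega⟩ :=
            hval y _ _ (by omega) (by omega)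
          rw [e1, e2, e3]
          cases hop : ops i <;> simp
        · -- a ≤ i ≤ b
          have hia' : a ≤ i := by omega
          have hib' : i ≤ b := by omega
          have e2 : ext y i = y ⟨(i-a+1).toNat, by omega⟩ :=
            hval y _ _ (by omega) (by omega)
          have e1 : ext y (i-1) = y ⟨(i-a+1).toNat - 1, by omega⟩ :=
            hval y _ _ (by omega) (by omega)
          have e3 : ext y (i+1) = y ⟨(i-a+1).toNat + 1, by omega⟩ :=
            hval y _ _ (by omega) (by omega)
          have hopsi : opsL.get ⟨(i-a+1).toNat - 1, by omega⟩ = ops i := by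
            rw [hget]
            congr 1
            omega
          have hI := hyI ((i-a+1).toNat) (by omega) (by omega)
          rw [hopsi] at hI
          rw [e1, e2, e3, hI]
    · funext i
      have hlt := i.isLt
      rw [hval y _ (i:ℕ) i.isLt (by omega)]
  -- assemble
  have e : {x : ℤ → Bool // infMap ops x = x} ≃
      {y : Fin (opsL.length+2) → Bool // chainMap opsL y = y} :=
    Equiv.ofBijective (fun x => ⟨fun i : Fin (opsL.length+2) => x.1 (a-1+(i:ℤ)), hfix x.1 x.2⟩)
      ⟨fun x x' h => Subtype.ext (hinj _ _ x.2 x'.2 (congrArg Subtype.val h)),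
       fun y => ⟨⟨ext y.1, (hEXT y.1 y.2).1⟩, Subtype.ext (hEXT y.1 y.2).2⟩⟩
  haveI hfin : Finite {x : ℤ → Bool // infMap ops x = x} := Finite.of_equiv _ e.symm
  constructor
  · exact Set.finite_coe_iff.mp hfin
  · rw [← Nat.card_coe_set_eq]
    unfold F
    exact Nat.card_congr e
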